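/- For every integer m ≥ 0, ∑_{a+b=m, a,b ≥ 0} (a+1)(b+1)·ζ(a+2, b+2) = (m+1)·ζ(2)·ζ(m+2) + (m+1)·ζ(2, m+2) − 2·ζ(m+4) − 2·ζ(m+1, 3). -/

import Mathlib

set_option maxHeartbeats 1000000

open Finset Filter


open scoped BigOperators

/-- The multiple zeta value `ζ(a₁, …, a_r)`, as a sum over strictly increasing
tuples of positive integers. -/
noncomputable def mz (a : List ℕ) : ℝ :=
  ∑' k : {k : Fin a.length → ℕ+ // StrictMono k},
    ∏ i, (1 : ℝ) / ((k.1 i : ℕ) : ℝ) ^ a.get i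

/-- The multiple zeta-star value `ζ⋆(a₁, …, a_r)`, as a sum over weakly increasing
tuples of positive integers. -/
noncomputable def mzs (a : List ℕ) : ℝ :=
  ∑' k : {k : Fin a.length → ℕ+ // Monotone k},
    ∏ i, (1 : ℝ) / ((k.1 i : ℕ) : ℝ) ^ a.get i

section auxpoly

lemma polyT (m : ℕ) (x y : ℝ) :
    (x - y)^2 * ∑ p ∈ Finset.HasAntidiagonal.antidiagonal m, (((p.2 : ℝ)+1) * (x^p.1 * y^p.2))
      = x^(m+2) - ((m:ℝ)+2)*x*y^(m+1) + ((m:ℝ)+1)*y^(m+2) := by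
  induction m with
  | zero => simp; ring
  | succ n ih =>
      rw [Finset.Nat.sum_antidiagonal_succ
        (f := fun p => (((p.2 : ℝ)+1) * (x^p.1 * y^p.2)))]
      have h2 : ∑ p ∈ Finset.HasAntidiagonal.antidiagonal n, (((p.2:ℝ)+1) * (x^(p.1+1) * y^p.2))
          = x * ∑ p ∈ Finset.HasAntidiagonal.antidiagonal n, (((p.2:ℝ)+1) * (x^p.1 * y^p.2)) := by
        rw [Finset.mul_sum]; exact Finset.sum_congr rfl fun p _ => by ring
      rw [h2]
      push_cast
      linear_combination x * ih

lemma polyS (m : ℕ) (x y : ℝ) :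
    (x - y)^3 * ∑ p ∈ Finset.HasAntidiagonal.antidiagonal m, (((p.1:ℝ)+1) * ((p.2 : ℝ)+1) * (x^p.1 * y^p.2))
      = ((m:ℝ)+1)*(x^(m+2)+y^(m+2))*(x-y) - 2*x*y*(x^(m+1) - y^(m+1)) := by
  induction m with
  | zero => simp; ring
  | succ n ih =>
      rw [Finset.Nat.sum_antidiagonal_succ
        (f := fun p => (((p.1:ℝ)+1) * ((p.2 : ℝ)+1) * (x^p.1 * y^p.2)))]
      have h2 : ∑ p ∈ Finset.HasAntidiagonal.antidiagonal n, ((((p.1+1:ℕ):ℝ)+1) * (((p.2:ℕ):ℝ)+1) * (x^(p.1+1) * y^p.2))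
          = x * ∑ p ∈ Finset.HasAntidiagonal.antidiagonal n, (((p.1:ℝ)+1) * ((p.2:ℝ)+1) * (x^p.1 * y^p.2))
            + x * ∑ p ∈ Finset.HasAntidiagonal.antidiagonal n, (((p.2:ℝ)+1) * (x^p.1 * y^p.2)) := by
        rw [Finset.mul_sum, Finset.mul_sum, ← Finset.sum_add_distrib]
        exact Finset.sum_congr rfl fun p _ => by push_cast; ring
      rw [h2]
      push_cast
      linear_combination x * ih + x * (x - y) * polyT n x y

lemma perpair (m k d : ℕ) :
    ∑ p ∈ Finset.HasAntidiagonal.antidiagonal m, (((p.1:ℝ)+1) * ((p.2:ℝ)+1) *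
        (1/((k:ℝ)+1)^(p.1+2) * (1/((k:ℝ)+(d:ℝ)+2)^(p.2+2))))
    = ((m:ℝ)+1) * (1/((k:ℝ)+1)^(m+2) * (1/((d:ℝ)+1)^2))
      + ((m:ℝ)+1) * (1/((d:ℝ)+1)^2 * (1/((k:ℝ)+(d:ℝ)+2)^(m+2)))
      - 2 * (1/((d:ℝ)+1)^3 * (1/((k:ℝ)+1)^(m+1) - 1/((k:ℝ)+(d:ℝ)+2)^(m+1))) := by
  have ha : ((k:ℝ)+1) > 0 := by positivity
  have hb : ((k:ℝ)+(d:ℝ)+2) > 0 := by positivity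
  have hD : ((d:ℝ)+1) > 0 := by positivity
  simp only [← one_div_pow]
  set a : ℝ := (k:ℝ)+1 with ha'
  set b : ℝ := (k:ℝ)+(d:ℝ)+2 with hb'
  set D : ℝ := (d:ℝ)+1 with hD'
  set x : ℝ := 1/a with hx
  set y : ℝ := 1/b with hy
  set z : ℝ := 1/D with hz
  have hane : a ≠ 0 := ne_of_gt ha
  have hbne : b ≠ 0 := ne_of_gt hb
  have hDne : D ≠ 0 := ne_of_gt hD
  have hxy : x - y = D * x * y := by
    rw [hx, hy, hD', ha', hb']; field_simp; ring
  have key := polyS m x y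
  rw [hxy] at key
  have hL : ∑ p ∈ Finset.HasAntidiagonal.antidiagonal m, (((p.1:ℝ)+1) * ((p.2:ℝ)+1) *
        (x^(p.1+2) * y^(p.2+2)))
      = x^2*y^2 * ∑ p ∈ Finset.HasAntidiagonal.antidiagonal m, (((p.1:ℝ)+1) * ((p.2:ℝ)+1) * (x^p.1 * y^p.2)) := by
    rw [Finset.mul_sum]
    exact Finset.sum_congr rfl fun p _ => by ring
  rw [hL]
  have hxne : x ≠ 0 := by rw [hx]; positivity
  have hyne : y ≠ 0 := by rw [hy]; positivity
  apply mul_left_cancel₀ (show D^3*x*y ≠ 0 by positivity)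
  calc D^3*x*y * (x^2*y^2 * ∑ p ∈ Finset.HasAntidiagonal.antidiagonal m,
          (((p.1:ℝ)+1) * ((p.2:ℝ)+1) * (x^p.1 * y^p.2)))
      = (D*x*y)^3 * ∑ p ∈ Finset.HasAntidiagonal.antidiagonal m,
          (((p.1:ℝ)+1) * ((p.2:ℝ)+1) * (x^p.1 * y^p.2)) := by ring
    _ = ((m:ℝ)+1)*(x^(m+2)+y^(m+2))*(D*x*y) - 2*x*y*(x^(m+1) - y^(m+1)) := key
    _ = D^3*x*y * (((m:ℝ)+1) * (x^(m+2) * z^2) + ((m:ℝ)+1) * (z^2 * y^(m+2))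
          - 2 * (z^3 * (x^(m+1) - y^(m+1)))) := by
        rw [hz]; field_simp

end auxpoly

section auxsummable

lemma S1 (s : ℕ) (hs : 2 ≤ s) : Summable (fun k : ℕ => 1/((k:ℝ)+1)^s) := by
  have h := (summable_nat_add_iff 1).mpr (Real.summable_one_div_nat_pow.mpr hs)
  exact h.congr fun n => by push_cast; ring

lemma S2 (p q : ℕ) (hp : 1 ≤ p) (hq : 2 ≤ q) (hpq : 4 ≤ p + q) :
    Summable (fun kd : ℕ × ℕ => 1/((kd.1:ℝ)+1)^p * (1/((kd.1:ℝ)+(kd.2:ℝ)+2)^q)) := by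
  have base : Summable (fun kd : ℕ × ℕ => (1/((kd.1:ℝ)+1)^2) * (1/((kd.2:ℝ)+1)^2)) :=
    (S1 2 le_rfl).mul_of_nonneg (S1 2 le_rfl) (fun _ => by positivity) (fun _ => by positivity)
  refine Summable.of_nonneg_of_le (fun _ => by positivity) (fun kd => ?_) base
  obtain ⟨k, d⟩ := kd
  have h1 : (1:ℝ) ≤ (k:ℝ)+1 := by have := Nat.cast_nonneg (α:=ℝ) k; linarith
  have h3 : (0:ℝ) < (k:ℝ)+1 := by positivity
  have h4 : (0:ℝ) < (d:ℝ)+1 := by positivity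
  have h5 : (0:ℝ) < (k:ℝ)+(d:ℝ)+2 := by positivity
  rw [one_div_mul_one_div, one_div_mul_one_div]
  apply one_div_le_one_div_of_le (by positivity)
  rcases Nat.lt_or_ge p 2 with hp2 | hp2
  · have hp1 : p = 1 := by omega
    have hq3 : 3 ≤ q := by omega
    subst hp1
    have c1 : ((k:ℝ)+1)*((d:ℝ)+1)^2 ≤ ((k:ℝ)+(d:ℝ)+2)^3 := by
      nlinarith [sq_nonneg ((k:ℝ)+1), sq_nonneg ((d:ℝ)+1)]
    have c2 : ((k:ℝ)+(d:ℝ)+2)^3 ≤ ((k:ℝ)+(d:ℝ)+2)^q := pow_le_pow_right₀ (by linarith) hq3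
    calc ((k:ℝ)+1)^2*((d:ℝ)+1)^2 = ((k:ℝ)+1)*(((k:ℝ)+1)*((d:ℝ)+1)^2) := by ring
      _ ≤ ((k:ℝ)+1)*((k:ℝ)+(d:ℝ)+2)^3 := mul_le_mul_of_nonneg_left c1 (le_of_lt h3)
      _ ≤ ((k:ℝ)+1)^1*((k:ℝ)+(d:ℝ)+2)^q := by
          rw [pow_one]; exact mul_le_mul_of_nonneg_left c2 (le_of_lt h3)
  · have c1 : ((k:ℝ)+1)^2 ≤ ((k:ℝ)+1)^p := pow_le_pow_right₀ h1 hp2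
    have c2 : ((d:ℝ)+1)^2 ≤ ((k:ℝ)+(d:ℝ)+2)^q := by
      calc ((d:ℝ)+1)^2 ≤ ((k:ℝ)+(d:ℝ)+2)^2 := by nlinarith
        _ ≤ ((k:ℝ)+(d:ℝ)+2)^q := pow_le_pow_right₀ (by linarith) hq
    exact mul_le_mul c1 c2 (by positivity) (by positivity)

end auxsummable

section auxequiv

def e1 : ℕ ≃ {k : Fin 1 → ℕ+ // StrictMono k} where
  toFun n := ⟨fun _ => ⟨n+1, Nat.succ_pos n⟩, fun i j hij => by
    have : i = j := Subsingleton.elim i j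
    exact absurd hij (by simp [this])⟩
  invFun s := (s.1 0 : ℕ) - 1
  left_inv n := by simp
  right_inv s := by
    apply Subtype.ext; funext i
    have hi : i = 0 := Subsingleton.elim i 0
    subst hi
    have h0 : 1 ≤ (s.1 0 : ℕ) := (s.1 0).one_le
    apply PNat.coe_injective
    simp [Nat.sub_add_cancel h0]

lemma mz_one (s : ℕ) : mz [s] = ∑' k : ℕ, 1/((k:ℝ)+1)^s := by
  rw [show mz [s] = ∑' k : {k : Fin 1 → ℕ+ // StrictMono k},
      ∏ i, (1 : ℝ) / ((k.1 i : ℕ) : ℝ) ^ ([s].get i) from rfl, ← Equiv.tsum_eq e1]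
  refine tsum_congr fun n => ?_
  simp [e1, Fin.prod_univ_one]

def e2 : ℕ × ℕ ≃ {k : Fin 2 → ℕ+ // StrictMono k} where
  toFun p := ⟨![⟨p.1+1, by omega⟩, ⟨p.1+p.2+2, by omega⟩], by
    rw [Fin.strictMono_iff_lt_succ]
    intro i
    fin_cases i
    simp [Fin.succ]
    change p.1 + 1 < p.1 + p.2 + 2
    omega⟩
  invFun s := ((s.1 0 : ℕ) - 1, (s.1 1 : ℕ) - (s.1 0 : ℕ) - 1)
  left_inv p := by
    obtain ⟨a, b⟩ := p
    simp
    omega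
  right_inv s := by
    obtain ⟨f, hf⟩ := s
    have h01 : f 0 < f 1 := hf (show (0 : Fin 2) < 1 by decide)
    have h01' : (f 0 : ℕ) < (f 1 : ℕ) := h01
    have h0 : 1 ≤ (f 0 : ℕ) := (f 0).one_le
    apply Subtype.ext; funext i
    fin_cases i
    · apply PNat.coe_injective; simp; omega
    · apply PNat.coe_injective; simp; omega

lemma mz_pair (p q : ℕ) :
    mz [p, q] = ∑' x : ℕ × ℕ, 1/((x.1:ℝ)+1)^p * (1/((x.1:ℝ)+(x.2:ℝ)+2)^q) := by
  rw [show mz [p, q] = ∑' k : {k : Fin 2 → ℕ+ // StrictMono k},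
      ∏ i, (1 : ℝ) / ((k.1 i : ℕ) : ℝ) ^ ([p, q].get i) from rfl, ← Equiv.tsum_eq e2]
  refine tsum_congr fun n => ?_
  simp [e2, Fin.prod_univ_two]
  ring

def e3 : ℕ × ℕ ≃ Σ d : ℕ, Fin (d+1) where
  toFun x := ⟨x.1 + x.2, ⟨x.1, by omega⟩⟩
  invFun s := (s.2.1, s.1 - s.2.1)
  left_inv x := by obtain ⟨a, b⟩ := x; simp
  right_inv s := by
    obtain ⟨d, ⟨k, hk⟩⟩ := s
    have h : k + (d - k) = d := by omega
    exact Sigma.ext h ((Fin.heq_ext_iff (show k + (d - k) + 1 = d + 1 by omega)).mpr rfl)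

lemma tsum_sigma_range (g : ℕ → ℕ → ℝ) (h : Summable fun x : ℕ × ℕ => g x.1 (x.1+x.2)) :
    ∑' x : ℕ × ℕ, g x.1 (x.1+x.2) = ∑' d, ∑ k ∈ Finset.range (d+1), g k d := by
  have h2 : Summable fun s : Σ d : ℕ, Fin (d+1) => g s.2.1 s.1 := by
    rw [← Equiv.summable_iff e3]
    exact h
  have e : ∑' x : ℕ × ℕ, g x.1 (x.1+x.2) = ∑' s : Σ d : ℕ, Fin (d+1), g s.2.1 s.1 :=
    Equiv.tsum_eq e3 (fun s : Σ d : ℕ, Fin (d+1) => g s.2.1 s.1)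
  rw [e, Summable.tsum_sigma' (fun b => (hasSum_fintype _).summable) h2]
  refine tsum_congr fun d => ?_
  rw [tsum_fintype]
  exact Fin.sum_univ_eq_sum_range (fun k => g k d) (d+1)

lemma telescope (F : ℕ → ℝ) (hF : Tendsto F atTop (nhds 0)) (c : ℕ)
    (hsum : Summable fun k => F k - F (k+c)) :
    ∑' k, (F k - F (k+c)) = ∑ j ∈ Finset.range c, F j := by
  have hps : ∀ N, ∑ k ∈ Finset.range N, (F k - F (k+c))
      = ∑ j ∈ Finset.range c, F j - ∑ j ∈ Finset.range c, F (N+j) := by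
    intro N
    rw [Finset.sum_sub_distrib]
    have h1 : ∑ k ∈ Finset.range N, F (k+c) = ∑ i ∈ Finset.range (c+N), F i
        - ∑ i ∈ Finset.range c, F i := by
      rw [Finset.sum_range_add]
      have : ∑ k ∈ Finset.range N, F (c+k) = ∑ k ∈ Finset.range N, F (k+c) :=
        Finset.sum_congr rfl fun k _ => by rw [Nat.add_comm]
      rw [this]; ring
    have h2 : ∑ i ∈ Finset.range (N+c), F i
        = ∑ i ∈ Finset.range N, F i + ∑ j ∈ Finset.range c, F (N+j) :=
      Finset.sum_range_add F N c
    have h3 : c + N = N + c := Nat.add_comm c N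
    rw [h1, h3, h2]; ring
  have hzero : Tendsto (fun N => ∑ j ∈ Finset.range c, F (N+j)) atTop (nhds 0) := by
    have : ∀ j ∈ Finset.range c, Tendsto (fun N => F (N+j)) atTop (nhds 0) := by
      intro j _
      exact hF.comp (tendsto_add_atTop_nat j)
    have := tendsto_finset_sum (Finset.range c) this
    simpa using this
  have hlim : Tendsto (fun N => ∑ k ∈ Finset.range N, (F k - F (k+c))) atTop
      (nhds (∑ j ∈ Finset.range c, F j)) := by
    simp only [hps]
    simpa using tendsto_const_nhds.sub hzero
  exact tendsto_nhds_unique hsum.hasSum.tendsto_sum_nat hlim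

end auxequiv

section mainaux

/-- `F m n = 1/(n+1)^(m+1)`. -/
noncomputable def Fm (m n : ℕ) : ℝ := 1/((n:ℝ)+1)^(m+1)

noncomputable def Am (m : ℕ) (p : ℕ × ℕ) : ℝ := 1/((p.1:ℝ)+1)^(m+2) * (1/((p.2:ℝ)+1)^2)

noncomputable def Bm (m : ℕ) (p : ℕ × ℕ) : ℝ :=
  1/((p.2:ℝ)+1)^2 * (1/((p.1:ℝ)+(p.2:ℝ)+2)^(m+2))

noncomputable def Tm (m : ℕ) (p : ℕ × ℕ) : ℝ :=
  1/((p.2:ℝ)+1)^3 * (1/((p.1:ℝ)+1)^(m+1) - 1/((p.1:ℝ)+(p.2:ℝ)+2)^(m+1))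

lemma Fm_tendsto (m : ℕ) : Tendsto (Fm m) atTop (nhds 0) := by
  have h1 : Tendsto (fun n : ℕ => ((n:ℝ)+1)) atTop atTop :=
    tendsto_atTop_add_const_right atTop 1 tendsto_natCast_atTop_atTop
  have h2 : Tendsto (fun n : ℕ => ((n:ℝ)+1)^(m+1)) atTop atTop :=
    (tendsto_pow_atTop (Nat.succ_ne_zero m)).comp h1
  have h3 := h2.inv_tendsto_atTop
  refine h3.congr fun n => ?_
  simp [Fm]

lemma Am_summable (m : ℕ) : Summable (Am m) :=
  (S1 (m+2) (by omega)).mul_of_nonneg (S1 2 le_rfl)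
    (fun _ => by positivity) (fun _ => by positivity)

lemma Bm_summable (m : ℕ) : Summable (Bm m) := by
  have h := (S2 2 (m+2) (by omega) (by omega) (by omega)).comp_injective
    (Prod.swap_injective (α := ℕ) (β := ℕ))
  refine h.congr fun p => ?_
  simp only [Function.comp, Bm, Prod.fst_swap, Prod.snd_swap]
  ring_nf

lemma Am_tsum (m : ℕ) : ∑' p : ℕ × ℕ, Am m p = mz [m+2] * mz [2] := by
  have hslice : ∀ k : ℕ, Summable fun d : ℕ => Am m (k, d) := by
    intro k
    refine ((S1 2 le_rfl).mul_left (1/((k:ℝ)+1)^(m+2))).congr fun d => ?_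
    simp [Am]
  rw [Summable.tsum_prod' (Am_summable m) hslice]
  have h1 : ∀ k:ℕ, ∑' d:ℕ, Am m (k, d) = 1/((k:ℝ)+1)^(m+2) * ∑' d:ℕ, 1/((d:ℝ)+1)^2 := by
    intro k
    simp only [Am]
    exact tsum_mul_left
  rw [tsum_congr h1, tsum_mul_right, mz_one, mz_one]

lemma Bm_tsum (m : ℕ) : ∑' p : ℕ × ℕ, Bm m p = mz [2, m+2] := by
  rw [mz_pair]
  rw [← Equiv.tsum_eq (Equiv.prodComm ℕ ℕ)
    (fun x : ℕ × ℕ => 1/((x.1:ℝ)+1)^2 * (1/((x.1:ℝ)+(x.2:ℝ)+2)^(m+2)))]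
  refine tsum_congr fun p => ?_
  simp only [Equiv.prodComm_apply, Prod.fst_swap, Prod.snd_swap, Bm]
  ring_nf

end mainaux

noncomputable def vm (m : ℕ) (d : ℕ) : ℝ := 1/((d:ℝ)+1)^3 * ∑ j ∈ Finset.range d, Fm m j

lemma vm_summable (m : ℕ) : Summable (vm m) := by
  refine Summable.of_nonneg_of_le (fun d => ?_) (fun d => ?_) (S1 2 le_rfl)
  · exact mul_nonneg (by positivity) (Finset.sum_nonneg fun j _ => by unfold Fm; positivity)
  · unfold vm
    have hb : ∑ j ∈ Finset.range d, Fm m j ≤ (d:ℝ) := by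
      have : ∀ j ∈ Finset.range d, Fm m j ≤ 1 := by
        intro j _
        unfold Fm
        rw [div_le_one (by positivity)]
        exact one_le_pow₀ (by have := Nat.cast_nonneg (α:=ℝ) j; linarith)
      calc ∑ j ∈ Finset.range d, Fm m j ≤ ∑ _j ∈ Finset.range d, (1:ℝ) :=
            Finset.sum_le_sum this
        _ = (d:ℝ) := by simp
    have hd : (0:ℝ) ≤ (d:ℝ) := Nat.cast_nonneg d
    have h1 : (0:ℝ) < ((d:ℝ)+1)^3 := by positivity
    calc 1/((d:ℝ)+1)^3 * ∑ j ∈ Finset.range d, Fm m j ≤ 1/((d:ℝ)+1)^3 * (d:ℝ) :=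
          mul_le_mul_of_nonneg_left hb (by positivity)
      _ ≤ 1/((d:ℝ)+1)^2 := by
          rw [div_mul_eq_mul_div, div_le_div_iff₀ h1 (by positivity)]
          nlinarith [sq_nonneg ((d:ℝ)+1)]

lemma vm_tsum (m : ℕ) : ∑' d, vm m (d+1) = mz [m+1, 3] := by
  have hg : Summable (fun x : ℕ × ℕ => Fm m x.1 * (1/(((x.1+x.2:ℕ):ℝ)+2)^3)) := by
    refine (S2 (m+1) 3 (by omega) (by omega) (by omega)).congr fun x => ?_
    unfold Fm; push_cast; ring
  have h0 : mz [m+1, 3] = ∑' x : ℕ × ℕ, Fm m x.1 * (1/(((x.1+x.2:ℕ):ℝ)+2)^3) := by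
    rw [mz_pair]
    refine tsum_congr fun x => ?_
    unfold Fm; push_cast; ring
  rw [h0, tsum_sigma_range (fun k d => Fm m k * (1/((d:ℝ)+2)^3)) hg]
  refine tsum_congr fun d => ?_
  rw [← Finset.sum_mul]
  unfold vm
  push_cast
  ring

lemma Tm_tsum (m : ℕ) (hT : Summable (Tm m)) :
    ∑' p : ℕ × ℕ, Tm m p = mz [m+4] + mz [m+1, 3] := by
  have hU : Summable (fun p : ℕ × ℕ => Tm m (p.2, p.1)) :=
    hT.comp_injective Prod.swap_injective
  have hswap : ∑' p : ℕ × ℕ, Tm m p = ∑' p : ℕ × ℕ, Tm m (p.2, p.1) :=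
    (Equiv.tsum_eq (Equiv.prodComm ℕ ℕ) (Tm m)).symm
  have hUslice : ∀ d : ℕ, Summable (fun k : ℕ => Tm m (k, d)) := by
    intro d
    exact hT.comp_injective (fun k₁ k₂ h => (Prod.ext_iff.mp h).1)
  rw [hswap, Summable.tsum_prod' hU (fun d => hUslice d)]
  have htele : ∀ d : ℕ, ∑' k : ℕ, Tm m (k, d)
      = 1/((d:ℝ)+1)^3 * ∑ j ∈ Finset.range (d+1), Fm m j := by
    intro d
    have hpt : ∀ k : ℕ, Tm m (k, d) = 1/((d:ℝ)+1)^3 * (Fm m k - Fm m (k+(d+1))) := by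
      intro k
      unfold Tm Fm
      push_cast
      ring
    have hsum2 : Summable (fun k : ℕ => Fm m k - Fm m (k+(d+1))) := by
      refine (((hUslice d).congr (fun k => hpt k)).mul_left (((d:ℝ)+1)^3)).congr fun k => ?_
      field_simp
    calc ∑' k : ℕ, Tm m (k, d)
        = ∑' k : ℕ, 1/((d:ℝ)+1)^3 * (Fm m k - Fm m (k+(d+1))) := tsum_congr hpt
      _ = 1/((d:ℝ)+1)^3 * ∑' k : ℕ, (Fm m k - Fm m (k+(d+1))) := tsum_mul_left
      _ = 1/((d:ℝ)+1)^3 * ∑ j ∈ Finset.range (d+1), Fm m j := by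
          rw [telescope (Fm m) (Fm_tendsto m) (d+1) hsum2]
  rw [tsum_congr htele]
  have hsplit : ∀ d : ℕ, 1/((d:ℝ)+1)^3 * ∑ j ∈ Finset.range (d+1), Fm m j
      = vm m d + 1/((d:ℝ)+1)^(m+4) := by
    intro d
    rw [Finset.sum_range_succ, mul_add]
    unfold vm
    congr 1
    unfold Fm
    rw [one_div_mul_one_div, ← pow_add, show 3+(m+1) = m+4 from by omega]
  rw [tsum_congr hsplit, Summable.tsum_add (vm_summable m) (S1 (m+4) (by omega))]
  rw [← mz_one (m+4)]
  rw [Summable.tsum_eq_zero_add (vm_summable m)]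
  have hv0 : vm m 0 = 0 := by simp [vm]
  rw [hv0, zero_add, vm_tsum m]
  ring

/-- For every integer `m ≥ 0`,
`∑_{a+b=m} (a+1)(b+1) ζ(a+2, b+2) = (m+1) ζ(2) ζ(m+2) + (m+1) ζ(2, m+2) − 2 ζ(m+4) − 2 ζ(m+1, 3)`. -/
theorem weighted_sum_double_zeta (m : ℕ) :
    ∑ x ∈ Finset.HasAntidiagonal.antidiagonal m,
      ((x.1 : ℝ) + 1) * ((x.2 : ℝ) + 1) * mz [x.1 + 2, x.2 + 2] =
    ((m : ℝ) + 1) * mz [2] * mz [m + 2] + ((m : ℝ) + 1) * mz [2, m + 2]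
      - 2 * mz [m + 4] - 2 * mz [m + 1, 3] := by
  classical
  have hmzx : ∀ x ∈ Finset.HasAntidiagonal.antidiagonal m,
      ((x.1 : ℝ) + 1) * ((x.2 : ℝ) + 1) * mz [x.1 + 2, x.2 + 2]
      = ∑' p : ℕ × ℕ, (((x.1:ℝ)+1) * ((x.2:ℝ)+1) *
          (1/((p.1:ℝ)+1)^(x.1+2) * (1/((p.1:ℝ)+(p.2:ℝ)+2)^(x.2+2)))) := by
    intro x _
    rw [mz_pair, ← tsum_mul_left]
  rw [Finset.sum_congr rfl hmzx]
  have hsx : ∀ x ∈ Finset.HasAntidiagonal.antidiagonal m, Summable (fun p : ℕ × ℕ =>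
      ((x.1:ℝ)+1) * ((x.2:ℝ)+1) *
        (1/((p.1:ℝ)+1)^(x.1+2) * (1/((p.1:ℝ)+(p.2:ℝ)+2)^(x.2+2)))) := by
    intro x _
    exact (S2 (x.1+2) (x.2+2) (by omega) (by omega) (by omega)).mul_left
      (((x.1:ℝ)+1) * ((x.2:ℝ)+1))
  rw [← Summable.tsum_finsetSum hsx]
  have hpp : ∀ p : ℕ × ℕ, ∑ x ∈ Finset.HasAntidiagonal.antidiagonal m, (((x.1:ℝ)+1) * ((x.2:ℝ)+1) *
      (1/((p.1:ℝ)+1)^(x.1+2) * (1/((p.1:ℝ)+(p.2:ℝ)+2)^(x.2+2))))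
      = ((m:ℝ)+1) * Am m p + ((m:ℝ)+1) * Bm m p - 2 * Tm m p := by
    intro p
    have h := perpair m p.1 p.2
    simp only [Am, Bm, Tm]
    exact h
  rw [tsum_congr hpp]
  have hA := Am_summable m
  have hB := Bm_summable m
  have hP : Summable (fun p : ℕ × ℕ => ∑ x ∈ Finset.HasAntidiagonal.antidiagonal m, (((x.1:ℝ)+1) * ((x.2:ℝ)+1) *
      (1/((p.1:ℝ)+1)^(x.1+2) * (1/((p.1:ℝ)+(p.2:ℝ)+2)^(x.2+2))))) := summable_sum hsx
  have hT : Summable (Tm m) := by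
    have h3 := ((((hA.mul_left ((m:ℝ)+1)).add (hB.mul_left ((m:ℝ)+1))).sub hP).div_const 2)
    refine h3.congr fun p => ?_
    rw [hpp p]
    ring
  rw [Summable.tsum_sub ((hA.mul_left ((m:ℝ)+1)).add (hB.mul_left ((m:ℝ)+1))) (hT.mul_left 2),
      Summable.tsum_add (hA.mul_left ((m:ℝ)+1)) (hB.mul_left ((m:ℝ)+1)),
      tsum_mul_left, tsum_mul_left, tsum_mul_left,
      Am_tsum, Bm_tsum, Tm_tsum m hT]
  ring
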